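/- Let β₁ < 0 and β₂ > 20β₁. Then for every ξ ∈ ℂ⁵ with Σ_{ℓ=−2}^{2}|ξ_ℓ|² = 1, one has β₁(|τ(ξ)|² + F_z(ξ)²) + (β₂/5)|δ(ξ)|² ≥ 4β₁, and equality is attained at ξ = (1,0,0,0,0); i.e., the minimum of β₁(|τ|² + F_z²) + (β₂/5)|δ|² over the complex unit sphere of ℂ⁵ equals 4β₁. -/

import Mathlib

noncomputable section
set_option maxHeartbeats 1000000

/-- τ for complex 5-vectors (ξ₂, ξ₁, ξ₀, ξ₋₁, ξ₋₂). -/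
def tauC (z2 z1 z0 zm1 zm2 : ℂ) : ℂ :=
  2 * ((starRingEnd ℂ) z2 * z1 + (starRingEnd ℂ) zm1 * zm2)
    + (Real.sqrt 6 : ℂ) * ((starRingEnd ℂ) z1 * z0 + (starRingEnd ℂ) z0 * zm1)

/-- δ for complex 5-vectors. -/
def deltaC (z2 z1 z0 zm1 zm2 : ℂ) : ℂ :=
  2 * z2 * zm2 - 2 * z1 * zm1 + z0 ^ 2

/-- F_z for complex 5-vectors. -/
def FzC (z2 z1 z0 zm1 zm2 : ℂ) : ℝ :=
  2 * (‖z2‖ ^ 2 - ‖zm2‖ ^ 2)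
    + ‖z1‖ ^ 2 - ‖zm1‖ ^ 2

/-- Membership in S_C(M): mass and magnetization constraints. -/
def memSC (M : ℝ) (z2 z1 z0 zm1 zm2 : ℂ) : Prop :=
  ‖z2‖ ^ 2 + ‖z1‖ ^ 2 + ‖z0‖ ^ 2
      + ‖zm1‖ ^ 2 + ‖zm2‖ ^ 2 = 1 ∧
  2 * ‖z2‖ ^ 2 + ‖z1‖ ^ 2
      - ‖zm1‖ ^ 2 - 2 * ‖zm2‖ ^ 2 = M

/-- The uniform energy E_U. -/
def EU (b0 b1 b2 M : ℝ) (z2 z1 z0 zm1 zm2 : ℂ) : ℝ :=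
  (1 / 2) * (b1 * ‖tauC z2 z1 z0 zm1 zm2‖ ^ 2
    + (b2 / 5) * ‖deltaC z2 z1 z0 zm1 zm2‖ ^ 2
    + b0 + b1 * M ^ 2)

lemma keyR (z2 z1 z0 zm1 zm2 : ℂ) :
    Complex.normSq (tauC z2 z1 z0 zm1 zm2) + FzC z2 z1 z0 zm1 zm2 ^ 2
      + 4 * Complex.normSq (deltaC z2 z1 z0 zm1 zm2)
      + 12 * Complex.normSq (z2 * (starRingEnd ℂ) zm1 + z1 * (starRingEnd ℂ) zm2)
      + 8 * Complex.normSq (z2 * (starRingEnd ℂ) z0 - z0 * (starRingEnd ℂ) zm2)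
      + 3 * (Complex.normSq zm1 - Complex.normSq z1) ^ 2
      + 2 * Complex.normSq (z0 * (starRingEnd ℂ) z1 + zm1 * (starRingEnd ℂ) z0)
    = 4 * (Complex.normSq z2 + Complex.normSq z1 + Complex.normSq z0
        + Complex.normSq zm1 + Complex.normSq zm2) ^ 2
      + 4 * Real.sqrt 6
        * ((z1 * (starRingEnd ℂ) z0 + z0 * (starRingEnd ℂ) zm1)
            * (starRingEnd ℂ) (z2 * (starRingEnd ℂ) z1 + zm1 * (starRingEnd ℂ) zm2)).re := by
  have hs6 : Real.sqrt 6 * Real.sqrt 6 = 6 := Real.mul_self_sqrt (by norm_num)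
  simp only [FzC, Complex.sq_norm]
  simp only [tauC, deltaC, Complex.normSq_apply, Complex.add_re,
    Complex.add_im, Complex.sub_re, Complex.sub_im, Complex.mul_re, Complex.mul_im,
    Complex.ofReal_re, Complex.ofReal_im, Complex.conj_re, Complex.conj_im,
    Complex.re_ofNat, Complex.im_ofNat, pow_two]
  linear_combination ((z1.re*z0.re + z1.im*z0.im + z0.re*zm1.re + z0.im*zm1.im)*(z1.re*z0.re + z1.im*z0.im + z0.re*zm1.re + z0.im*zm1.im) + (z1.im*z0.re - z1.re*z0.im + z0.im*zm1.re - z0.re*zm1.im)*(z1.im*z0.re - z1.re*z0.im + z0.im*zm1.re - z0.re*zm1.im)) * hs6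

lemma main_ineq (z2 z1 z0 zm1 zm2 : ℂ)
    (h : ‖z2‖ ^ 2 + ‖z1‖ ^ 2 + ‖z0‖ ^ 2
        + ‖zm1‖ ^ 2 + ‖zm2‖ ^ 2 = 1) :
    ‖tauC z2 z1 z0 zm1 zm2‖ ^ 2 + FzC z2 z1 z0 zm1 zm2 ^ 2
      + 4 * ‖deltaC z2 z1 z0 zm1 zm2‖ ^ 2 ≤ 4 := by
  set cj := starRingEnd ℂ with hcj
  set A := z2 * cj zm1 + z1 * cj zm2 with hA
  set B := z2 * cj z0 - z0 * cj zm2 with hB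
  set C := z2 * cj z1 + zm1 * cj zm2 with hC
  set D := z1 * cj z0 + z0 * cj zm1 with hD
  set F := z0 * cj z1 + zm1 * cj z0 with hF
  set E : ℝ := Complex.normSq zm1 - Complex.normSq z1 with hE
  have hs0 : (0:ℝ) ≤ Real.sqrt 6 := Real.sqrt_nonneg 6
  have hs6 : Real.sqrt 6 * Real.sqrt 6 = 6 := Real.mul_self_sqrt (by norm_num)
  have hnorm : Complex.normSq z2 + Complex.normSq z1 + Complex.normSq z0
      + Complex.normSq zm1 + Complex.normSq zm2 = 1 := by
    simpa only [← Complex.sq_norm] using h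
  have key := keyR z2 z1 z0 zm1 zm2
  rw [← hA, ← hB, ← hC, ← hD, ← hF, ← hE, hnorm] at key
  -- Plücker relation
  have hPl : C * D = A * F - B * ((E : ℝ) : ℂ) := by
    rw [hA, hB, hC, hD, hF, hE, Complex.ofReal_sub, ← Complex.mul_conj, ← Complex.mul_conj]
    ring
  -- chain of bounds
  have e1 : (D * cj C).re ≤ ‖D‖ * ‖C‖ := by
    calc (D * cj C).re ≤ ‖D * cj C‖ := Complex.re_le_norm _
      _ = ‖D‖ * ‖C‖ := by rw [norm_mul, hcj, Complex.norm_conj]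
  have e2 : ‖D‖ * ‖C‖ ≤ ‖A‖ * ‖F‖
      + ‖B‖ * |E| := by
    have : ‖D‖ * ‖C‖ = ‖A * F - B * ((E:ℝ):ℂ)‖ := by
      rw [← hPl, norm_mul, mul_comm]
    rw [this]
    calc ‖A * F - B * ((E:ℝ):ℂ)‖
        ≤ ‖A * F‖ + ‖B * ((E:ℝ):ℂ)‖ := by
          exact norm_sub_le (A * F) (B * ((E:ℝ):ℂ))
      _ = ‖A‖ * ‖F‖ + ‖B‖ * |E| := by
          rw [norm_mul, norm_mul, Complex.norm_real, Real.norm_eq_abs]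
  have e3 : (4 * Real.sqrt 6) * (D * cj C).re
      ≤ (4 * Real.sqrt 6) * (‖A‖ * ‖F‖ + ‖B‖ * |E|) := by
    apply mul_le_mul_of_nonneg_left (le_trans e1 e2) (by positivity)
  have e4 : 4 * Real.sqrt 6 * (‖A‖ * ‖F‖)
      ≤ 12 * ‖A‖ ^ 2 + 2 * ‖F‖ ^ 2 := by
    nlinarith [sq_nonneg (2 * ‖A‖ * Real.sqrt 6 - 2 * ‖F‖), hs6,
      sq_nonneg (‖A‖)]
  have e5 : 4 * Real.sqrt 6 * (‖B‖ * |E|)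
      ≤ 8 * ‖B‖ ^ 2 + 3 * E ^ 2 := by
    nlinarith [sq_nonneg (2 * ‖B‖ * Real.sqrt 6 - 3 * |E|), hs6,
      sq_nonneg (‖B‖), sq_abs E]
  have hA2 : Complex.normSq A = ‖A‖ ^ 2 := (Complex.sq_norm A).symm
  have hB2 : Complex.normSq B = ‖B‖ ^ 2 := (Complex.sq_norm B).symm
  have hF2 : Complex.normSq F = ‖F‖ ^ 2 := (Complex.sq_norm F).symm
  rw [hA2, hB2, hF2] at key
  have htau : ‖tauC z2 z1 z0 zm1 zm2‖ ^ 2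
      = Complex.normSq (tauC z2 z1 z0 zm1 zm2) := Complex.sq_norm _
  have hdel : ‖deltaC z2 z1 z0 zm1 zm2‖ ^ 2
      = Complex.normSq (deltaC z2 z1 z0 zm1 zm2) := Complex.sq_norm _
  rw [htau, hdel]
  nlinarith [key, e3, e4, e5]

theorem stmt19 (b1 b2 : ℝ) (hb1 : b1 < 0) (hb2 : b2 > 20 * b1) :
    (∀ z2 z1 z0 zm1 zm2 : ℂ,
      ‖z2‖ ^ 2 + ‖z1‖ ^ 2 + ‖z0‖ ^ 2
        + ‖zm1‖ ^ 2 + ‖zm2‖ ^ 2 = 1 →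
      4 * b1 ≤ b1 * (‖tauC z2 z1 z0 zm1 zm2‖ ^ 2
          + FzC z2 z1 z0 zm1 zm2 ^ 2)
        + (b2 / 5) * ‖deltaC z2 z1 z0 zm1 zm2‖ ^ 2) ∧
    b1 * (‖tauC 1 0 0 0 0‖ ^ 2 + FzC 1 0 0 0 0 ^ 2)
      + (b2 / 5) * ‖deltaC 1 0 0 0 0‖ ^ 2 = 4 * b1 := by
  constructor
  · intro z2 z1 z0 zm1 zm2 h
    have hm := main_ineq z2 z1 z0 zm1 zm2 h
    have hd : 0 ≤ ‖deltaC z2 z1 z0 zm1 zm2‖ ^ 2 := sq_nonneg _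
    nlinarith [hm, hd, mul_nonneg (le_of_lt (neg_pos.mpr hb1))
      (sub_nonneg.mpr hm)]
  · norm_num [tauC, deltaC, FzC]
    ring
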